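/- For every real number s with 0 < s ≤ 16 and every k ∈ {14, 15, 16}, the k-trace of the 16-element multiset of real numbers consisting of s² (once), −s (eight times), and −2s (seven times) is strictly negative. -/
import Mathlib


/-- The `k`-trace of a finite multiset of real numbers: the sum of its `k` largest elements,
i.e. the supremum of the sums of its sub-multisets of cardinality `k`. -/
noncomputable def ktrace (k : ℕ) (s : Multiset ℝ) : ℝ :=
  sSup {x : ℝ | ∃ t ≤ s, Multiset.card t = k ∧ t.sum = x}

/-- for `0 < s ≤ 16` and `k ∈ {14, 15, 16}`, the `k`-trace of the multiset
consisting of `s²` (once), `−s` (eight times) and `−2s` (seven times) is negative. -/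
theorem stmt1 (s : ℝ) (hs0 : 0 < s) (hs16 : s ≤ 16) (k : ℕ)
    (hk : k = 14 ∨ k = 15 ∨ k = 16) :
    ktrace k (s ^ 2 ::ₘ (Multiset.replicate 8 (-s) + Multiset.replicate 7 (-(2 * s)))) < 0 := by
  set S : Multiset ℝ := s ^ 2 ::ₘ (Multiset.replicate 8 (-s) + Multiset.replicate 7 (-(2 * s)))
    with hS
  have hcardS : Multiset.card S = 16 := by simp [hS]
  have hk16 : k ≤ 16 := by rcases hk with h | h | h <;> omega
  have hsumS : S.sum = s ^ 2 - 22 * s := by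
    simp [hS, Multiset.sum_replicate]
    ring
  -- every element of S is ≥ -2s
  have hlb : ∀ x ∈ S, -(2 * s) ≤ x := by
    intro x hx
    simp [hS, Multiset.mem_replicate] at hx
    rcases hx with h | h | h | h <;> subst h <;> nlinarith
  -- the set is nonempty
  have hne : {x : ℝ | ∃ t ≤ S, Multiset.card t = k ∧ t.sum = x}.Nonempty := by
    obtain ⟨l, hl⟩ : ∃ l : List ℝ, S.toList = l := ⟨_, rfl⟩
    refine ⟨((l.take k : List ℝ) : Multiset ℝ).sum, (l.take k : List ℝ), ?_, ?_, rfl⟩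
    · have h1 : ((l.take k : List ℝ) : Multiset ℝ) ≤ (l : Multiset ℝ) :=
        (l.take_sublist k).subperm
      have h2 : (l : Multiset ℝ) = S := by rw [← hl]; exact S.coe_toList
      rwa [h2] at h1
    · have hlen : l.length = 16 := by
        have := congrArg Multiset.card (congrArg (fun l : List ℝ => (l : Multiset ℝ))
          hl ▸ S.coe_toList)
        simpa [← hl, hcardS] using congrArg Multiset.card S.coe_toList.symm
      simp [List.length_take, hlen]
      omega
  -- upper bound on elements of the set
  have hub : ∀ x ∈ {x : ℝ | ∃ t ≤ S, Multiset.card t = k ∧ t.sum = x},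
      x ≤ s ^ 2 - 22 * s + (16 - k : ℕ) * (2 * s) := by
    rintro x ⟨t, ht, hcard, rfl⟩
    have hsplit : t.sum + (S - t).sum = S.sum := by
      rw [← Multiset.sum_add]
      congr 1
      rw [add_comm]
      exact tsub_add_cancel_of_le ht
    have hcard' : Multiset.card (S - t) = 16 - k := by
      rw [Multiset.card_sub ht, hcardS, hcard]
    have hlow : (Multiset.card (S - t)) • (-(2 * s)) ≤ (S - t).sum := by
      apply Multiset.card_nsmul_le_sum
      intro x hx
      exact hlb x (Multiset.mem_of_le (Multiset.sub_le_self S t) hx)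
    rw [hcard'] at hlow
    have hlow' : -(((16 - k : ℕ) : ℝ) * (2 * s)) ≤ (S - t).sum := by
      simpa [nsmul_eq_mul, neg_mul] using hlow
    have : t.sum = S.sum - (S - t).sum := by linarith
    rw [this, hsumS]
    linarith
  have hle : ktrace k S ≤ s ^ 2 - 22 * s + (16 - k : ℕ) * (2 * s) := csSup_le hne hub
  have hfin : s ^ 2 - 22 * s + (16 - k : ℕ) * (2 * s) < 0 := by
    rcases hk with h | h | h <;> subst h <;> norm_num <;> nlinarith
  exact lt_of_le_of_lt hle hfin
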